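/- Let n, p ∈ ℕ with p ≥ n ≥ 1, and index the set I⁺(n,p) = {ξ ∈ ℕ^n : ξ_i ≥ 1, ∑ξ_i ≤ p} as ξ_1, …, ξ_M. The M×M matrix D with entries D_{ij} = ∏_{l=1}^n (ξ_{j,l}²)^{ξ_{i,l}} = ξ_j^{2ξ_i} is nonsingular. -/

import Mathlib

/-- The set I⁺(n,p) of vectors in ℕ^n with strictly positive coordinates and
coordinate sum at most p. -/
def Iplus (n p : ℕ) : Finset (Fin n → ℕ) :=
  ((Finset.range (p + 1)).biUnion (fun m => Finset.Nat.antidiagonalTuple n m)).filter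
    (fun ξ => ∀ i, 1 ≤ ξ i)

lemma mem_Iplus {n p : ℕ} {ξ : Fin n → ℕ} :
    ξ ∈ Iplus n p ↔ (∑ i, ξ i) ≤ p ∧ ∀ i, 1 ≤ ξ i := by
  simp only [Iplus, Finset.mem_filter, Finset.mem_biUnion, Finset.mem_range,
    Finset.Nat.mem_antidiagonalTuple, Nat.lt_succ_iff]
  constructor
  · rintro ⟨⟨m, hm, rfl⟩, h2⟩; exact ⟨hm, h2⟩
  · rintro ⟨h1, h2⟩; exact ⟨⟨_, h1, rfl⟩, h2⟩

lemma sum_Iplus_succ {M : Type*} [AddCommMonoid M] (n p : ℕ) (f : (Fin (n + 1) → ℕ) → M) :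
    ∑ ξ ∈ Iplus (n + 1) p, f ξ =
      ∑ k ∈ Finset.Icc 1 p, ∑ ξ' ∈ Iplus n (p - k), f (Fin.cons k ξ') := by
  trans (∑ x ∈ (Finset.Icc 1 p).sigma (fun k => Iplus n (p - k)), f (Fin.cons x.1 x.2))
  swap
  · rw [Finset.sum_sigma]
  apply Finset.sum_nbij' (fun ξ => (⟨ξ 0, Fin.tail ξ⟩ : Σ _ : ℕ, Fin n → ℕ))
    (fun x => Fin.cons x.1 x.2)
  · intro ξ hξ
    obtain ⟨h1, h2⟩ := mem_Iplus.mp hξ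
    rw [Fin.sum_univ_succ] at h1
    have ht : ∑ i : Fin n, Fin.tail ξ i = ∑ i : Fin n, ξ i.succ := rfl
    refine Finset.mem_sigma.mpr ⟨Finset.mem_Icc.mpr ⟨h2 0, ?_⟩,
      mem_Iplus.mpr ⟨?_, fun i => h2 i.succ⟩⟩
    · show ξ 0 ≤ p
      omega
    · show ∑ i : Fin n, Fin.tail ξ i ≤ p - ξ 0
      omega
  · rintro ⟨k, ξ'⟩ hx
    dsimp only at hx ⊢
    obtain ⟨hk, hξ'⟩ := Finset.mem_sigma.mp hx
    obtain ⟨hk1, hk2⟩ := Finset.mem_Icc.mp hk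
    obtain ⟨h1, h2⟩ := mem_Iplus.mp hξ'
    dsimp only at h1 h2 hk1 hk2
    refine mem_Iplus.mpr ⟨?_, ?_⟩
    · rw [Fin.sum_univ_succ]
      simp only [Fin.cons_zero, Fin.cons_succ]
      omega
    · intro i
      refine Fin.cases ?_ ?_ i <;> simp [hk1, h2]
  · intro ξ _; exact Fin.cons_self_tail ξ
  · rintro ⟨k, ξ'⟩ _; simp
  · intro ξ _; rw [Fin.cons_self_tail]

lemma key : ∀ (n p : ℕ) (c : (Fin n → ℕ) → ℚ),
    (∀ ξ, ξ ∉ Iplus n p → c ξ = 0) →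
    (∀ η ∈ Iplus n p, ∑ ξ ∈ Iplus n p, c ξ * ∏ l, ((η l : ℚ)) ^ (2 * ξ l) = 0) →
    ∀ ξ, c ξ = 0 := by
  intro n
  induction n with
  | zero =>
    intro p c hsupp hrow ξ
    have h0 : (fun _ => 0 : Fin 0 → ℕ) ∈ Iplus 0 p :=
      mem_Iplus.mpr ⟨by simp, fun i => i.elim0⟩
    have hsing : Iplus 0 p = {fun _ => 0} :=
      Finset.eq_singleton_iff_unique_mem.mpr ⟨h0, fun x _ => funext fun i => i.elim0⟩
    have hr := hrow _ h0
    rw [hsing, Finset.sum_singleton] at hr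
    simp only [Finset.univ_eq_empty, Finset.prod_empty, mul_one] at hr
    have hξ : ξ = fun _ => 0 := funext fun i => i.elim0
    rw [hξ]; exact hr
  | succ n IH =>
    intro p c hsupp hrow
    have inner : ∀ d : ℕ, ∀ j, p + 1 - d ≤ j → ∀ ξ' ∈ Iplus n (p - j),
        c (Fin.cons j ξ') = 0 := by
      intro d
      induction d with
      | zero =>
        intro j hj ξ' hξ'
        apply hsupp
        intro hmem
        obtain ⟨h1, _⟩ := mem_Iplus.mp hmem
        rw [Fin.sum_univ_succ] at h1
        simp only [Fin.cons_zero, Fin.cons_succ] at h1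
        omega
      | succ d ihd =>
        intro j hj ξ' hξ'
        by_cases hjd : p + 1 - d ≤ j
        · exact ihd j hjd ξ' hξ'
        have hjp : j ≤ p := by omega
        rcases Nat.eq_zero_or_pos j with hj0 | hj1
        · apply hsupp
          intro hmem
          have h2 := (mem_Iplus.mp hmem).2 0
          rw [hj0] at h2
          simp at h2
        obtain ⟨hs, hpos⟩ := mem_Iplus.mp hξ'
        set g : ℕ → (Fin n → ℕ) → ℚ := fun k η' =>
          ∑ ξ'' ∈ Iplus n (p - k), c (Fin.cons k ξ'') * ∏ l, ((η' l : ℚ)) ^ (2 * ξ'' l)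
          with hg_def
        have hhigh : ∀ k, j < k → ∀ η', g k η' = 0 := by
          intro k hk η'
          apply Finset.sum_eq_zero
          intro ξ'' hξ''
          rw [ihd k (by omega) ξ'' hξ'', zero_mul]
        have hg : ∀ η' ∈ Iplus n (p - j), g j η' = 0 := by
          intro η' hη'
          obtain ⟨hs', hpos'⟩ := mem_Iplus.mp hη'
          set q : Polynomial ℚ :=
            ∑ k ∈ Finset.Icc 1 j, Polynomial.C (g k η') * Polynomial.X ^ k with hq_def
          have heval : ∀ m ∈ Finset.range (j + 1), q.eval ((m : ℚ) ^ 2) = 0 := by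
            intro m hm
            rw [Finset.mem_range] at hm
            rcases Nat.eq_zero_or_pos m with hm0 | hm1
            · subst hm0
              rw [hq_def, Polynomial.eval_finset_sum]
              apply Finset.sum_eq_zero
              intro k hk
              have hk1 : k ≠ 0 := by
                have := (Finset.mem_Icc.mp hk).1; omega
              simp [zero_pow, hk1]
            · have hmem : Fin.cons m η' ∈ Iplus (n + 1) p := by
                refine mem_Iplus.mpr ⟨?_, ?_⟩
                · rw [Fin.sum_univ_succ]
                  simp only [Fin.cons_zero, Fin.cons_succ]
                  omega
                · intro i
                  refine Fin.cases ?_ ?_ i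
                  · simpa using (show 1 ≤ m from hm1)
                  · intro i'; simpa using hpos' i'
              have hr := hrow _ hmem
              rw [sum_Iplus_succ] at hr
              have hr2 : ∑ k ∈ Finset.Icc 1 p, (m : ℚ) ^ (2 * k) * g k η' = 0 := by
                rw [← hr]
                apply Finset.sum_congr rfl
                intro k _
                rw [hg_def, Finset.mul_sum]
                apply Finset.sum_congr rfl
                intro ξ'' _
                rw [Fin.prod_univ_succ]
                simp only [Fin.cons_zero, Fin.cons_succ]
                ring
              have hr3 : ∑ k ∈ Finset.Icc 1 j, (m : ℚ) ^ (2 * k) * g k η' = 0 := by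
                rw [← hr2]
                apply Finset.sum_subset (Finset.Icc_subset_Icc_right hjp)
                intro k hk hk'
                rw [Finset.mem_Icc] at hk
                rw [Finset.mem_Icc] at hk'
                rw [hhigh k (by omega) η', mul_zero]
              have heq : q.eval ((m : ℚ) ^ 2) =
                  ∑ k ∈ Finset.Icc 1 j, (m : ℚ) ^ (2 * k) * g k η' := by
                rw [hq_def, Polynomial.eval_finset_sum]
                apply Finset.sum_congr rfl
                intro k _
                simp only [Polynomial.eval_mul, Polynomial.eval_C, Polynomial.eval_pow,
                  Polynomial.eval_X]
                rw [mul_comm 2 k, pow_mul]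
                ring
              rw [heq]; exact hr3
          have hq0 : q = 0 := by
            apply Polynomial.eq_zero_of_natDegree_lt_card_of_eval_eq_zero' q
              ((Finset.range (j + 1)).image (fun m : ℕ => (m : ℚ) ^ 2))
            · intro i hi
              obtain ⟨m, hm, rfl⟩ := Finset.mem_image.mp hi
              exact heval m hm
            · have hcard : ((Finset.range (j + 1)).image (fun m : ℕ => (m : ℚ) ^ 2)).card
                  = j + 1 := by
                rw [Finset.card_image_of_injOn, Finset.card_range]
                intro a _ b _ hab
                have hab' : ((a ^ 2 : ℕ) : ℚ) = ((b ^ 2 : ℕ) : ℚ) := by push_cast; exact hab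
                have : a ^ 2 = b ^ 2 := Nat.cast_injective hab'
                nlinarith [this]
              rw [hcard, Nat.lt_succ_iff]
              apply Polynomial.natDegree_sum_le_of_forall_le
              intro k hk
              apply (Polynomial.natDegree_mul_le).trans
              simp only [Polynomial.natDegree_C, Polynomial.natDegree_X_pow, zero_add]
              exact (Finset.mem_Icc.mp hk).2
          have hcoeff : q.coeff j = g j η' := by
            rw [hq_def, Polynomial.finset_sum_coeff]
            rw [Finset.sum_eq_single j]
            · simp [Polynomial.coeff_C_mul, Polynomial.coeff_X_pow]
            · intro k hk hkj
              simp [Polynomial.coeff_C_mul, Polynomial.coeff_X_pow, (Ne.symm hkj)]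
            · intro h
              exact absurd (Finset.mem_Icc.mpr ⟨hj1, le_refl j⟩) h
          rw [hq0, Polynomial.coeff_zero] at hcoeff
          exact hcoeff.symm
        simp only [hg_def] at hg
        refine IH (p - j) (fun ξ'' => c (Fin.cons j ξ'')) ?_ ?_ ξ'
        · intro ξ'' hξ''
          apply hsupp
          intro hmem
          apply hξ''
          obtain ⟨h1, h2⟩ := mem_Iplus.mp hmem
          rw [Fin.sum_univ_succ] at h1
          simp only [Fin.cons_zero, Fin.cons_succ] at h1
          refine mem_Iplus.mpr ⟨by omega, fun i => ?_⟩
          have := h2 i.succ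
          simpa using this
        · intro η' hη'
          exact hg η' hη'
    intro ξ
    by_cases hmem : ξ ∈ Iplus (n + 1) p
    · obtain ⟨h1, h2⟩ := mem_Iplus.mp hmem
      rw [Fin.sum_univ_succ] at h1
      have htail : Fin.tail ξ ∈ Iplus n (p - ξ 0) := by
        refine mem_Iplus.mpr ⟨?_, fun i => h2 i.succ⟩
        have ht : ∑ i : Fin n, Fin.tail ξ i = ∑ i : Fin n, ξ i.succ := rfl
        omega
      have := inner (p + 1) (ξ 0) (by omega) (Fin.tail ξ) htail
      rwa [Fin.cons_self_tail] at this
    · exact hsupp ξ hmem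

/-- The matrix D generated by I⁺(n,p), with entries D_{ξη} = η^{2ξ} = ∏_l η_l^{2ξ_l},
is nonsingular. -/
theorem D_nonsingular (n p : ℕ) (hn : 1 ≤ n) (hp : n ≤ p) :
    Matrix.det (fun ξ η : ↥(Iplus n p) =>
      ∏ l, ((η : Fin n → ℕ) l : ℚ) ^ (2 * (ξ : Fin n → ℕ) l)) ≠ 0 := by
  intro hdet
  obtain ⟨v, hv0, hv⟩ := Matrix.exists_vecMul_eq_zero_iff.mpr hdet
  classical
  set c : (Fin n → ℕ) → ℚ := fun ξ => if h : ξ ∈ Iplus n p then v ⟨ξ, h⟩ else 0 with hc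
  have hzero := key n p c ?_ ?_
  · apply hv0
    funext x
    have hx := hzero x.1
    rw [hc] at hx
    simpa [x.2] using hx
  · intro ξ hξ
    simp [hc, hξ]
  · intro η hη
    have hv' := congrFun hv ⟨η, hη⟩
    simp only [Matrix.vecMul, dotProduct, Pi.zero_apply] at hv'
    rw [← Finset.sum_coe_sort, ← hv']
    apply Finset.sum_congr rfl
    intro x _
    congr 1
    simp [hc]
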